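/- Let q be a prime power such that either F_q has characteristic 2 or q ≡ 1 (mod 4), let m be a positive integer coprime to q, and let R = F_q[Y]/(Y^m − 1). Let C_0 ⊆ R^{2ℓ} be a Hermitian self-dual linear code over R generated as an R-module by vectors r_1, …, r_k. Let c ∈ R satisfy c · conj(c) = −1, let x ∈ R^{2ℓ} satisfy ⟨x,x⟩ = −1, and set y_i = −⟨r_i, x⟩ for 1 ≤ i ≤ k. Then the R-submodule C of R^{2ℓ+2} generated by the vector (1, 0, x) together with the vectors (y_i, c·y_i, r_i) for 1 ≤ i ≤ k is a Hermitian self-dual linear code over R of length 2ℓ+2. -/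

import Mathlib

open Polynomial

noncomputable section

/-- The ring `R = F_q[Y]/(Y^m − 1)`. -/
abbrev Rq (F : Type) [Field F] (m : ℕ) := AdjoinRoot ((X : F[X]) ^ m - 1)

lemma root_pow_eq_one (F : Type) [Field F] (m : ℕ) :
    (AdjoinRoot.root ((X : F[X]) ^ m - 1)) ^ m = 1 := by
  have h : (aeval (AdjoinRoot.root ((X : F[X]) ^ m - 1)) ((X : F[X]) ^ m - 1)) = 0 := by
    rw [AdjoinRoot.aeval_eq, AdjoinRoot.mk_self]
  simp only [map_sub, map_pow, aeval_X, map_one, sub_eq_zero] at h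
  exact h

/-- Conjugation on `R`: the `F`-algebra map determined by `Y ↦ Y^{m−1} (= Y⁻¹)`. -/
noncomputable def conjR (F : Type) [Field F] (m : ℕ) : Rq F m →ₐ[F] Rq F m :=
  AdjoinRoot.liftAlgHom _ (Algebra.ofId F _) ((AdjoinRoot.root ((X : F[X]) ^ m - 1)) ^ (m - 1)) (by
    have h : aeval ((AdjoinRoot.root ((X : F[X]) ^ m - 1)) ^ (m - 1)) ((X : F[X]) ^ m - 1) = 0 := by
      simp only [map_sub, map_pow, aeval_X, map_one, sub_eq_zero, ← pow_mul]
      rw [mul_comm, pow_mul, root_pow_eq_one, one_pow]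
    exact h)

/-- The Hermitian inner product `⟨x,y⟩ = Σ_j x_j ⬝ conj(y_j)` on `R^n`. -/
def herm (F : Type) [Field F] (m : ℕ) {n : ℕ} (x y : Fin n → Rq F m) : Rq F m :=
  ∑ j, x j * conjR F m (y j)

/-- A linear code `C ⊆ R^n` is Hermitian self-dual if `C = C^⊥`, i.e. membership in `C`
coincides with orthogonality to all of `C`. -/
def IsHermSelfDual (F : Type) [Field F] (m : ℕ) {n : ℕ}
    (C : Submodule (Rq F m) (Fin n → Rq F m)) : Prop :=
  ∀ y, y ∈ C ↔ ∀ x ∈ C, herm F m x y = 0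

section Aux

variable (F : Type) [Field F] (m : ℕ)

lemma conjR_root :
    conjR F m (AdjoinRoot.root ((X : F[X]) ^ m - 1)) =
      (AdjoinRoot.root ((X : F[X]) ^ m - 1)) ^ (m - 1) := by
  unfold conjR
  apply AdjoinRoot.liftAlgHom_root

lemma conjR_conjR (hm : 0 < m) (a : Rq F m) : conjR F m (conjR F m a) = a := by
  have key : ((AdjoinRoot.root ((X : F[X]) ^ m - 1)) ^ (m - 1)) ^ (m - 1) =
      AdjoinRoot.root ((X : F[X]) ^ m - 1) := by
    rw [← pow_mul]
    match m, hm with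
    | 1, _ =>
      have h1 := root_pow_eq_one F 1
      rw [show (1 - 1) * (1 - 1) = 0 from rfl, pow_zero]
      exact h1.symm.trans (pow_one _)
    | (n + 2), _ =>
      have h : (n + 2 - 1) * (n + 2 - 1) = (n + 2) * n + 1 := by
        show (n + 1) * (n + 1) = (n + 2) * n + 1
        ring
      rw [h, pow_succ (AdjoinRoot.root ((X : F[X]) ^ (n + 2) - 1)) ((n + 2) * n),
        pow_mul, root_pow_eq_one F (n + 2), one_pow, one_mul]
  have hcomp : (conjR F m).comp (conjR F m) = AlgHom.id F (Rq F m) := by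
    apply AdjoinRoot.algHom_ext
    rw [AlgHom.comp_apply, conjR_root, map_pow, conjR_root, AlgHom.id_apply, key]
  calc conjR F m (conjR F m a) = ((conjR F m).comp (conjR F m)) a := rfl
    _ = a := by rw [hcomp]; rfl

variable {n : ℕ}

lemma herm_add_left (x x' y : Fin n → Rq F m) :
    herm F m (x + x') y = herm F m x y + herm F m x' y := by
  simp [herm, add_mul, Finset.sum_add_distrib]

lemma herm_smul_left (a : Rq F m) (x y : Fin n → Rq F m) :
    herm F m (a • x) y = a * herm F m x y := by
  simp [herm, Finset.mul_sum, mul_assoc]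

lemma herm_zero_left (y : Fin n → Rq F m) : herm F m 0 y = 0 := by simp [herm]

lemma herm_add_right (x y y' : Fin n → Rq F m) :
    herm F m x (y + y') = herm F m x y + herm F m x y' := by
  simp [herm, mul_add, Finset.sum_add_distrib]

lemma herm_sub_right (x y y' : Fin n → Rq F m) :
    herm F m x (y - y') = herm F m x y - herm F m x y' := by
  simp [herm, mul_sub, Finset.sum_sub_distrib]

lemma herm_smul_right (a : Rq F m) (x y : Fin n → Rq F m) :
    herm F m x (a • y) = conjR F m a * herm F m x y := by
  simp [herm, Finset.mul_sum, mul_left_comm]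

lemma herm_zero_right (x : Fin n → Rq F m) : herm F m x 0 = 0 := by simp [herm]

lemma conjR_herm (hm : 0 < m) (x y : Fin n → Rq F m) :
    conjR F m (herm F m x y) = herm F m y x := by
  simp only [herm, map_sum, map_mul, conjR_conjR F m hm]
  exact Finset.sum_congr rfl fun j _ => mul_comm _ _

lemma herm_sum_right {ι : Type} [Fintype ι] (x : Fin n → Rq F m)
    (b : ι → Rq F m) (g : ι → Fin n → Rq F m) :
    herm F m x (∑ i, b i • g i) = ∑ i, conjR F m (b i) * herm F m x (g i) := by
  classical
  induction (Finset.univ : Finset ι) using Finset.induction with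
  | empty => simp [herm_zero_right]
  | insert a s h ih => rw [Finset.sum_insert h, Finset.sum_insert h, herm_add_right,
      herm_smul_right, ih]

lemma herm_span_left {S : Set (Fin n → Rq F m)} {w : Fin n → Rq F m}
    (h : ∀ g ∈ S, herm F m g w = 0) :
    ∀ x ∈ Submodule.span (Rq F m) S, herm F m x w = 0 := by
  intro x hx
  induction hx using Submodule.span_induction with
  | mem g hg => exact h g hg
  | zero => exact herm_zero_left F m w
  | add a b _ _ ha hb => rw [herm_add_left, ha, hb, add_zero]
  | smul a b _ hb => rw [herm_smul_left, hb, mul_zero]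

lemma herm_span_right {S : Set (Fin n → Rq F m)} {w : Fin n → Rq F m}
    (h : ∀ g ∈ S, herm F m w g = 0) :
    ∀ x ∈ Submodule.span (Rq F m) S, herm F m w x = 0 := by
  intro x hx
  induction hx using Submodule.span_induction with
  | mem g hg => exact h g hg
  | zero => exact herm_zero_right F m w
  | add a b _ _ ha hb => rw [herm_add_right, ha, hb, add_zero]
  | smul a b _ hb => rw [herm_smul_right, hb, mul_zero]

lemma herm_append {n1 n2 : ℕ} (u v : Fin n1 → Rq F m) (x y : Fin n2 → Rq F m) :
    herm F m (Fin.append u x) (Fin.append v y) = herm F m u v + herm F m x y := by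
  simp [herm, Fin.sum_univ_add, Fin.append_left, Fin.append_right]

lemma herm_two (a b a' b' : Rq F m) :
    herm F m ![a, b] ![a', b'] = a * conjR F m a' + b * conjR F m b' := by
  simp [herm, Fin.sum_univ_two]

end Aux

/-- Building-up construction, char 2 or `q ≡ 1 (mod 4)` case. -/
theorem statement2 (F : Type) [Field F] [Fintype F]
    (hq : ringChar F = 2 ∨ Fintype.card F % 4 = 1)
    (m : ℕ) (hm : 0 < m) (hcop : Nat.Coprime m (Fintype.card F))
    (ℓ k : ℕ) (r : Fin k → (Fin (2 * ℓ) → Rq F m))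
    (C₀ : Submodule (Rq F m) (Fin (2 * ℓ) → Rq F m))
    (hC₀span : C₀ = Submodule.span (Rq F m) (Set.range r))
    (hC₀sd : IsHermSelfDual F m C₀)
    (c : Rq F m) (hc : c * conjR F m c = -1)
    (x : Fin (2 * ℓ) → Rq F m) (hx : herm F m x x = -1)
    (y : Fin k → Rq F m) (hy : ∀ i, y i = - herm F m (r i) x) :
    IsHermSelfDual F m
      (Submodule.span (Rq F m)
        (({Fin.append ![1, 0] x} : Set (Fin (2 + 2 * ℓ) → Rq F m)) ∪
          Set.range fun i => Fin.append ![y i, c * y i] (r i))) := by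
  classical
  have hconj : ∀ a : Rq F m, conjR F m (conjR F m a) = a := conjR_conjR F m hm
  set v0 : Fin (2 + 2 * ℓ) → Rq F m := Fin.append ![1, 0] x with hv0
  set vi : Fin k → (Fin (2 + 2 * ℓ) → Rq F m) :=
    fun i => Fin.append ![y i, c * y i] (r i) with hvi
  set S : Set (Fin (2 + 2 * ℓ) → Rq F m) := {v0} ∪ Set.range vi with hS
  -- basic inner products
  have hrx : ∀ i, herm F m (r i) x = -(y i) := fun i => by rw [hy i, neg_neg]
  have hxr : ∀ i, herm F m x (r i) = -(conjR F m (y i)) := fun i => by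
    rw [← conjR_herm F m hm, hrx, map_neg]
  have hrmem : ∀ i, r i ∈ C₀ := fun i => by
    rw [hC₀span]; exact Submodule.subset_span ⟨i, rfl⟩
  have hrr : ∀ i j, herm F m (r i) (r j) = 0 := fun i j =>
    ((hC₀sd (r j)).1 (hrmem j)) (r i) (hrmem i)
  -- orthogonality of the generators
  have h00 : herm F m v0 v0 = 0 := by
    rw [hv0, herm_append, herm_two, hx]
    simp
  have h0i : ∀ i, herm F m v0 (vi i) = 0 := fun i => by
    rw [hv0, hvi, herm_append, herm_two, hxr]
    simp
  have hi0 : ∀ i, herm F m (vi i) v0 = 0 := fun i => by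
    rw [hv0, hvi, herm_append, herm_two, hrx]
    simp
  have hij : ∀ i j, herm F m (vi i) (vi j) = 0 := fun i j => by
    rw [hvi, herm_append, herm_two, hrr]
    simp only [map_mul]
    linear_combination (y i * conjR F m (y j)) * hc
  have hSS : ∀ g ∈ S, ∀ g' ∈ S, herm F m g g' = 0 := by
    intro g hg g' hg'
    rw [hS, Set.mem_union, Set.mem_singleton_iff, Set.mem_range] at hg hg'
    obtain (rfl | ⟨i, rfl⟩) := hg <;> obtain (rfl | ⟨j, rfl⟩) := hg'
    · exact h00
    · exact h0i j
    · exact hi0 i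
    · exact hij i j
  intro w
  constructor
  · -- forward direction
    intro hw g hg
    exact herm_span_left F m
      (fun g'' hg'' => herm_span_right F m (fun g' hg' => hSS g'' hg'' g' hg') w hw) g hg
  · -- reverse direction
    intro hw
    have hv0mem : v0 ∈ Submodule.span (Rq F m) S :=
      Submodule.subset_span (by rw [hS]; exact Set.mem_union_left _ rfl)
    have hvimem : ∀ i, vi i ∈ Submodule.span (Rq F m) S := fun i =>
      Submodule.subset_span (by rw [hS]; exact Set.mem_union_right _ ⟨i, rfl⟩)
    -- decompose w
    set u : Rq F m := w (Fin.castAdd (2 * ℓ) 0) with hu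
    set v : Rq F m := w (Fin.castAdd (2 * ℓ) 1) with hv
    set z : Fin (2 * ℓ) → Rq F m := fun j => w (Fin.natAdd 2 j) with hz
    have hwdec : w = Fin.append ![u, v] z := by
      funext i
      refine Fin.addCases (motive := fun i => w i = Fin.append ![u, v] z i)
        (fun i0 => ?_) (fun j => ?_) i
      · simp only [Fin.append_left]
        fin_cases i0 <;> rfl
      · simp only [Fin.append_right]
        rfl
    have e0 : conjR F m u + herm F m x z = 0 := by
      have h := hw v0 hv0mem
      rw [hwdec, hv0, herm_append, herm_two] at h
      simpa using h
    have ei : ∀ i, y i * conjR F m u + c * y i * conjR F m v + herm F m (r i) z = 0 := by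
      intro i
      have h := hw (vi i) (hvimem i)
      rw [hwdec, hvi, herm_append, herm_two] at h
      linear_combination h
    set β : Rq F m := u + conjR F m c * v with hβ
    have hconjβ : conjR F m β = conjR F m u + c * conjR F m v := by
      rw [hβ, map_add, map_mul, hconj]
    set p : Fin (2 * ℓ) → Rq F m := z - β • x with hp
    have hrp : ∀ i, herm F m (r i) p = 0 := by
      intro i
      rw [hp, herm_sub_right, herm_smul_right, hrx, hconjβ]
      linear_combination ei i
    have hpC₀ : p ∈ C₀ := by
      refine (hC₀sd p).2 ?_
      rw [hC₀span]
      refine herm_span_left F m ?_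
      rintro g ⟨i, rfl⟩
      exact hrp i
    rw [hC₀span] at hpC₀
    obtain ⟨b, hb⟩ := (Submodule.mem_span_range_iff_exists_fun (Rq F m)).1 hpC₀
    have hxp : herm F m x p = -(conjR F m (∑ i, b i * y i)) := by
      rw [← hb, herm_sum_right]
      simp [hxr, map_sum, map_mul, mul_neg, Finset.sum_neg_distrib]
    have hzp : z = p + β • x := by rw [hp, sub_add_cancel]
    have hxz : herm F m x z = herm F m x p - conjR F m β := by
      rw [hzp, herm_add_right, herm_smul_right, hx]
      ring
    have hby : ∑ i, b i * y i = -(conjR F m c * v) := by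
      have h1 : conjR F m (∑ i, b i * y i) = -(c * conjR F m v) := by
        have h := e0
        rw [hxz, hxp, hconjβ] at h
        linear_combination -h
      have h2 := congrArg (conjR F m) h1
      rw [hconj] at h2
      rw [h2, map_neg, map_mul, hconj]
    have happ : Fin.append ![u, v] z = β • v0 + ∑ i, b i • vi i := by
      funext t
      refine Fin.addCases
        (motive := fun t => Fin.append ![u, v] z t = (β • v0 + ∑ i, b i • vi i) t)
        (fun i0 => ?_) (fun j => ?_) t
      · simp only [Fin.append_left]
        simp only [Pi.add_apply, Pi.smul_apply, Finset.sum_apply, smul_eq_mul, hv0, hvi,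
          Fin.append_left]
        fin_cases i0
        · simp only [Fin.zero_eta, Fin.mk_one, Matrix.cons_val_zero, Matrix.cons_val_one,
            Matrix.head_cons]
          rw [hby, hβ]
          ring
        · simp only [Fin.zero_eta, Fin.mk_one, Matrix.cons_val_zero, Matrix.cons_val_one,
            Matrix.head_cons]
          have hs : ∑ i, b i * (c * y i) = c * ∑ i, b i * y i := by
            rw [Finset.mul_sum]
            exact Finset.sum_congr rfl fun i _ => by ring
          rw [hs, hby]
          linear_combination v * hc
      · simp only [Fin.append_right]
        simp only [Pi.add_apply, Pi.smul_apply, Finset.sum_apply, smul_eq_mul, hv0, hvi,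
          Fin.append_right]
        have hbj : ∑ i, b i * r i j = z j - β * x j := by
          have h := congrFun hb j
          simpa [Finset.sum_apply, Pi.smul_apply, smul_eq_mul, hp, Pi.sub_apply] using h
        rw [hbj]
        ring
    rw [hwdec, happ]
    exact Submodule.add_mem _ (Submodule.smul_mem _ _ hv0mem)
      (Submodule.sum_mem _ fun i _ => Submodule.smul_mem _ _ (hvimem i))
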